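/- arXiv:2203.12956 — 2 statements merged into one kernel-verified Lean document; each statement's English description precedes it below -/
import Mathlib

section
/- Identify ℝ² with ℝ²×{0} ⊂ ℝ³. Let ε ≤ 1/20 and let g assign to each point q ∈ ℝ³ a symmetric bilinear form g_q on ℝ³ such that ‖g_q − ⟨·,·⟩‖ ≤ ε for every q (in the operator norm on bounded bilinear forms, ⟨·,·⟩ being the euclidean inner product) and ‖g_q − g_{q'}‖ ≤ ε‖q − q'‖ for all q, q'. Then for every point p in the cylinder Z_{3/2} = {(x,z) : x ∈ ℝ², |x| ≤ 3/2, |z| ≤ 3/2} there exists a unique x in the closed disc of radius 2 in ℝ² such that g_{(x,0)}(p − (x,0), v) = 0 for every v ∈ ℝ²×{0}. -/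
open scoped RealInnerProductSpace

/-- Abbreviation for `ℝ³`, with `ℝ²` identified with `ℝ² × {0} = {q : q³ = 0}`. -/
noncomputable abbrev E3 := EuclideanSpace ℝ (Fin 3)

/-- The euclidean inner product of `ℝ³` as a continuous bilinear form. -/
noncomputable def euclInner : E3 →L[ℝ] E3 →L[ℝ] ℝ :=
  LinearMap.mkContinuous₂
    (LinearMap.mk₂ ℝ (fun u v => ⟪u, v⟫)
      (fun u u' v => inner_add_left u u' v)
      (fun c u v => by show ⟪c • u, v⟫ = c • ⟪u, v⟫; rw [real_inner_smul_left, smul_eq_mul])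
      (fun u v v' => inner_add_right u v v')
      (fun c u v => by show ⟪u, c • v⟫ = c • ⟪u, v⟫; rw [real_inner_smul_right, smul_eq_mul]))
    1
    (fun u v => by
      simpa [Real.norm_eq_abs, one_mul] using abs_real_inner_le_norm u v)

lemma euclInner_single (u : E3) (i : Fin 3) :
    euclInner u (EuclideanSpace.single i 1) = u i := by
  show ⟪u, EuclideanSpace.single i (1:ℝ)⟫ = u i
  rw [EuclideanSpace.inner_single_right]; simp

lemma planar_decomp (v : E3) (hv : v 2 = 0) :
    v = v 0 • EuclideanSpace.single 0 1 + v 1 • EuclideanSpace.single 1 1 := by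
  ext j
  fin_cases j <;> simp [EuclideanSpace.single_apply, hv]

lemma planar_norm (u : E3) (hu : u 2 = 0) : ‖u‖ = Real.sqrt ((u 0)^2 + (u 1)^2) := by
  rw [EuclideanSpace.norm_eq]
  congr 1
  simp [Fin.sum_univ_three, hu, Real.norm_eq_abs, sq_abs]

lemma planar_norm_le (u : E3) (hu : u 2 = 0) {r : ℝ} (hr : 0 ≤ r)
    (h : (u 0)^2 + (u 1)^2 ≤ r^2) : ‖u‖ ≤ r := by
  rw [planar_norm u hu]
  calc Real.sqrt ((u 0)^2 + (u 1)^2) ≤ Real.sqrt (r^2) := Real.sqrt_le_sqrt h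
    _ = r := Real.sqrt_sq hr

/-- The auxiliary contraction map. -/
noncomputable def Phi (g : E3 → (E3 →L[ℝ] E3 →L[ℝ] ℝ)) (p x : E3) : E3 :=
  (p 0 + (g x - euclInner) (p - x) (EuclideanSpace.single 0 1)) • EuclideanSpace.single 0 1
    + (p 1 + (g x - euclInner) (p - x) (EuclideanSpace.single 1 1)) • EuclideanSpace.single 1 1

lemma Phi_apply_zero (g : E3 → (E3 →L[ℝ] E3 →L[ℝ] ℝ)) (p x : E3) :
    Phi g p x 0 = p 0 + (g x - euclInner) (p - x) (EuclideanSpace.single 0 1) := by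
  simp [Phi, EuclideanSpace.single_apply]

lemma Phi_apply_one (g : E3 → (E3 →L[ℝ] E3 →L[ℝ] ℝ)) (p x : E3) :
    Phi g p x 1 = p 1 + (g x - euclInner) (p - x) (EuclideanSpace.single 1 1) := by
  simp [Phi, EuclideanSpace.single_apply]

lemma Phi_apply_two (g : E3 → (E3 →L[ℝ] E3 →L[ℝ] ℝ)) (p x : E3) :
    Phi g p x 2 = 0 := by
  simp [Phi, EuclideanSpace.single_apply]


set_option maxHeartbeats 2000000 in
/-- Riemannian projection onto the plane: if `g` assigns to each point of `ℝ³` a symmetric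
bilinear form that is `ε`-close (`ε ≤ 1/20`) to the euclidean inner product in operator norm
and `ε`-Lipschitz in the base point, then for every `p` in the cylinder
`Z_{3/2} = {(x,z) : |x| ≤ 3/2, |z| ≤ 3/2}` there is a unique point `x` of the plane
`ℝ² × {0}` with `‖x‖ ≤ 2` such that `p − x` is `g_x`-orthogonal to the plane. -/
theorem riemannian_projection_exists_unique
    (ε : ℝ) (hε : ε ≤ 1 / 20)
    (g : E3 → (E3 →L[ℝ] E3 →L[ℝ] ℝ))
    (hsym : ∀ q u v, g q u v = g q v u)
    (hclose : ∀ q, ‖g q - euclInner‖ ≤ ε)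
    (hlip : ∀ q q', ‖g q - g q'‖ ≤ ε * ‖q - q'‖)
    (p : E3) (hp1 : (p 0) ^ 2 + (p 1) ^ 2 ≤ (3 / 2) ^ 2) (hp2 : |p 2| ≤ 3 / 2) :
    ∃! x : E3, x 2 = 0 ∧ ‖x‖ ≤ 2 ∧ ∀ v : E3, v 2 = 0 → g x (p - x) v = 0 := by
  have hε0 : 0 ≤ ε := (norm_nonneg (g 0 - euclInner)).trans (hclose 0)
  -- norm of p
  have hpsq : ‖p‖^2 = (p 0)^2 + (p 1)^2 + (p 2)^2 := by
    rw [EuclideanSpace.norm_eq, Real.sq_sqrt (by positivity)]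
    simp [Fin.sum_univ_three, Real.norm_eq_abs, sq_abs]
  have hp2sq : (p 2)^2 ≤ (3/2)^2 := by
    have := pow_le_pow_left₀ (abs_nonneg (p 2)) hp2 2
    simpa [sq_abs] using this
  have hnp : ‖p‖ ≤ 2.2 := by nlinarith [norm_nonneg p]
  -- self-map bound on the bilinear correction
  have hself : ∀ (x : E3) (i : Fin 3),
      |(g x - euclInner) (p - x) (EuclideanSpace.single i 1)| ≤ ε * ‖p - x‖ := by
    intro x i
    have h := (g x - euclInner).le_opNorm₂ (p - x) (EuclideanSpace.single i (1:ℝ))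
    rw [EuclideanSpace.norm_single] at h
    simp only [Real.norm_eq_abs, norm_one, mul_one] at h
    calc |(g x - euclInner) (p - x) (EuclideanSpace.single i 1)|
        ≤ ‖g x - euclInner‖ * ‖p - x‖ := h
      _ ≤ ε * ‖p - x‖ := by
          exact mul_le_mul_of_nonneg_right (hclose x) (norm_nonneg _)
  -- difference bound
  have hdiff : ∀ (x y : E3) (i : Fin 3),
      |(g x - euclInner) (p - x) (EuclideanSpace.single i 1)
        - (g y - euclInner) (p - y) (EuclideanSpace.single i 1)|
      ≤ ε * (1 + ‖p - y‖) * ‖x - y‖ := by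
    intro x y i
    set w : E3 := EuclideanSpace.single i 1 with hw
    have hnw : ‖w‖ = 1 := by simp [hw]
    have hsplit : (g x - euclInner) (p - x) w - (g y - euclInner) (p - y) w
        = (g x - euclInner) (y - x) w + (g x - g y) (p - y) w := by
      simp only [ContinuousLinearMap.sub_apply, map_sub]
      ring
    rw [hsplit]
    have h1 : |(g x - euclInner) (y - x) w| ≤ ε * ‖x - y‖ := by
      have h := (g x - euclInner).le_opNorm₂ (y - x) w
      rw [hnw, mul_one] at h
      simp only [Real.norm_eq_abs] at h
      calc |(g x - euclInner) (y - x) w| ≤ ‖g x - euclInner‖ * ‖y - x‖ := h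
        _ ≤ ε * ‖x - y‖ := by
            rw [norm_sub_rev y x]
            exact mul_le_mul_of_nonneg_right (hclose x) (norm_nonneg _)
    have h2 : |(g x - g y) (p - y) w| ≤ ε * ‖x - y‖ * ‖p - y‖ := by
      have h := (g x - g y).le_opNorm₂ (p - y) w
      rw [hnw, mul_one] at h
      simp only [Real.norm_eq_abs] at h
      calc |(g x - g y) (p - y) w| ≤ ‖g x - g y‖ * ‖p - y‖ := h
        _ ≤ ε * ‖x - y‖ * ‖p - y‖ :=
            mul_le_mul_of_nonneg_right (hlip x y) (norm_nonneg _)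
    calc |(g x - euclInner) (y - x) w + (g x - g y) (p - y) w|
        ≤ |(g x - euclInner) (y - x) w| + |(g x - g y) (p - y) w| := abs_add_le _ _
      _ ≤ ε * ‖x - y‖ + ε * ‖x - y‖ * ‖p - y‖ := add_le_add h1 h2
      _ = ε * (1 + ‖p - y‖) * ‖x - y‖ := by ring
  -- the invariant set
  set S : Set E3 := {x | x 2 = 0 ∧ ‖x‖ ≤ 2} with hSdef
  have hadd : ∀ x ∈ S, ‖p - x‖ ≤ 4.2 := by
    intro x hx
    calc ‖p - x‖ ≤ ‖p‖ + ‖x‖ := norm_sub_le _ _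
      _ ≤ 2.2 + 2 := add_le_add hnp hx.2
      _ = 4.2 := by norm_num
  -- maps S to S
  have hmaps : ∀ x ∈ S, Phi g p x ∈ S := by
    intro x hx
    refine ⟨Phi_apply_two g p x, ?_⟩
    have ha : ε * ‖p - x‖ ≤ 0.21 := by nlinarith [hadd x hx, norm_nonneg (p - x)]
    have ha0 : 0 ≤ ε * ‖p - x‖ := mul_nonneg hε0 (norm_nonneg _)
    have h0 : |Phi g p x 0| ≤ |p 0| + ε * ‖p - x‖ := by
      rw [Phi_apply_zero]
      exact (abs_add_le _ _).trans (add_le_add_right (hself x 0) _)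
    have h1 : |Phi g p x 1| ≤ |p 1| + ε * ‖p - x‖ := by
      rw [Phi_apply_one]
      exact (abs_add_le _ _).trans (add_le_add_right (hself x 1) _)
    have hp0 : |p 0| ≤ 3/2 := by nlinarith [sq_abs (p 0), sq_abs (p 1), abs_nonneg (p 0), sq_nonneg (p 1)]
    have hp1' : |p 1| ≤ 3/2 := by nlinarith [sq_abs (p 0), sq_abs (p 1), abs_nonneg (p 1), sq_nonneg (p 0)]
    refine planar_norm_le _ (Phi_apply_two g p x) (by norm_num) ?_
    have e0 : (Phi g p x 0)^2 ≤ (|p 0| + ε * ‖p - x‖)^2 := by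
      rw [← sq_abs]; exact pow_le_pow_left₀ (abs_nonneg _) h0 2
    have e1 : (Phi g p x 1)^2 ≤ (|p 1| + ε * ‖p - x‖)^2 := by
      rw [← sq_abs]; exact pow_le_pow_left₀ (abs_nonneg _) h1 2
    have hAB : |p 0| + |p 1| ≤ 3 := by linarith
    have hsq : |p 0|^2 + |p 1|^2 ≤ 9/4 := by rw [sq_abs, sq_abs]; linarith
    have hprod : (ε * ‖p - x‖) * (|p 0| + |p 1|) ≤ (ε * ‖p - x‖) * 3 :=
      mul_le_mul_of_nonneg_left hAB ha0
    nlinarith [abs_nonneg (p 0), abs_nonneg (p 1)]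
  -- contraction
  have hcontr : ∀ x ∈ S, ∀ y ∈ S, ‖Phi g p x - Phi g p y‖ ≤ (1/2) * ‖x - y‖ := by
    intro x hx y hy
    have hD0 : (0:ℝ) ≤ ‖x - y‖ := norm_nonneg _
    have hb : ε * (1 + ‖p - y‖) ≤ 0.26 := by nlinarith [hadd y hy, norm_nonneg (p - y)]
    have hb0 : 0 ≤ ε * (1 + ‖p - y‖) :=
      mul_nonneg hε0 (by positivity)
    have hsub2 : (Phi g p x - Phi g p y) 2 = 0 := by
      rw [PiLp.sub_apply, Phi_apply_two, Phi_apply_two, sub_zero]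
    refine planar_norm_le _ hsub2 (by positivity) ?_
    have h0 : |(Phi g p x - Phi g p y) 0| ≤ ε * (1 + ‖p - y‖) * ‖x - y‖ := by
      rw [PiLp.sub_apply, Phi_apply_zero, Phi_apply_zero]
      simpa [add_sub_add_left_eq_sub] using hdiff x y 0
    have h1 : |(Phi g p x - Phi g p y) 1| ≤ ε * (1 + ‖p - y‖) * ‖x - y‖ := by
      rw [PiLp.sub_apply, Phi_apply_one, Phi_apply_one]
      simpa [add_sub_add_left_eq_sub] using hdiff x y 1
    have e0 : ((Phi g p x - Phi g p y) 0)^2 ≤ (ε * (1 + ‖p - y‖) * ‖x - y‖)^2 := by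
      rw [← sq_abs]; exact pow_le_pow_left₀ (abs_nonneg _) h0 2
    have e1 : ((Phi g p x - Phi g p y) 1)^2 ≤ (ε * (1 + ‖p - y‖) * ‖x - y‖)^2 := by
      rw [← sq_abs]; exact pow_le_pow_left₀ (abs_nonneg _) h1 2
    nlinarith [mul_le_mul_of_nonneg_right hb hD0, mul_nonneg hb0 hD0]
  -- fixed point iff orthogonality condition
  have hiff : ∀ x : E3, x 2 = 0 →
      ((∀ v : E3, v 2 = 0 → g x (p - x) v = 0) ↔ Phi g p x = x) := by
    intro x hx2
    constructor
    · intro hcond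
      have h0 : g x (p - x) (EuclideanSpace.single 0 1) = 0 :=
        hcond _ (by simp [EuclideanSpace.single_apply])
      have h1 : g x (p - x) (EuclideanSpace.single 1 1) = 0 :=
        hcond _ (by simp [EuclideanSpace.single_apply])
      have c0 : Phi g p x 0 = x 0 := by
        rw [Phi_apply_zero]
        simp only [ContinuousLinearMap.sub_apply, h0, euclInner_single, PiLp.sub_apply]
        ring
      have c1 : Phi g p x 1 = x 1 := by
        rw [Phi_apply_one]
        simp only [ContinuousLinearMap.sub_apply, h1, euclInner_single, PiLp.sub_apply]
        ring
      have c2 : Phi g p x 2 = x 2 := by rw [Phi_apply_two]; exact hx2.symm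
      ext j
      fin_cases j
      · exact c0
      · exact c1
      · exact c2
    · intro hfix
      have h0 : g x (p - x) (EuclideanSpace.single 0 1) = 0 := by
        have := congrArg (fun u : E3 => u 0) hfix
        simp only [Phi_apply_zero] at this
        simp only [ContinuousLinearMap.sub_apply, euclInner_single, PiLp.sub_apply] at this
        linarith [this]
      have h1 : g x (p - x) (EuclideanSpace.single 1 1) = 0 := by
        have := congrArg (fun u : E3 => u 1) hfix
        simp only [Phi_apply_one] at this
        simp only [ContinuousLinearMap.sub_apply, euclInner_single, PiLp.sub_apply] at this
        linarith [this]
      intro v hv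
      rw [planar_decomp v hv, map_add, map_smul, map_smul, smul_eq_mul, smul_eq_mul, h0, h1]
      ring
  -- S is complete
  have hSc : IsClosed S := by
    have hc2 : Continuous fun x : E3 => x 2 :=
      (PiLp.proj (𝕜 := ℝ) 2 (fun _ : Fin 3 => ℝ) 2).continuous
    exact (isClosed_eq hc2 continuous_const).inter
      (isClosed_le continuous_norm continuous_const)
  have h0S : (0 : E3) ∈ S := ⟨by simp, by simp⟩
  have hsf : Set.MapsTo (Phi g p) S S := hmaps
  have hcw : ContractingWith (1/2 : NNReal) (hsf.restrict (Phi g p) S S) := by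
    constructor
    · exact_mod_cast (by norm_num : ((1:ℝ)/2) < 1)
    · refine LipschitzWith.of_dist_le_mul fun a b => ?_
      have h := hcontr a a.2 b b.2
      simp only [Subtype.dist_eq, dist_eq_norm, Set.MapsTo.val_restrict_apply]
      calc ‖Phi g p a.1 - Phi g p b.1‖ ≤ (1/2) * ‖a.1 - b.1‖ := h
        _ = ((1/2 : NNReal) : ℝ) * ‖a.1 - b.1‖ := by norm_num
  obtain ⟨y, hyS, hfix, -, -⟩ :=
    hcw.exists_fixedPoint' hSc.isComplete hsf h0S (edist_ne_top _ _)
  refine ⟨y, ⟨hyS.1, hyS.2, (hiff y hyS.1).2 hfix⟩, ?_⟩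
  rintro z ⟨hz2, hzn, hzcond⟩
  have hzfix : Phi g p z = z := (hiff z hz2).1 hzcond
  have hyfix : Phi g p y = y := hfix
  have h := hcontr z ⟨hz2, hzn⟩ y hyS
  rw [hzfix, hyfix] at h
  have : ‖z - y‖ = 0 := by linarith [norm_nonneg (z - y)]
  exact sub_eq_zero.mp (norm_eq_zero.mp this)
end

section
/- Let E and F be real normed spaces, V ⊆ E a convex set, θ ∈ (0,1], and M₁, M₂, M₃ ≥ 0. Let g : ℝ × E → F be such that for each t the map v ↦ g(t,v) is continuously differentiable on a neighborhood of V with partial derivative D₂g satisfying: ‖D₂g(t,v)‖ ≤ M₁ for all t ∈ ℝ, v ∈ V; ‖D₂g(t,u) − D₂g(t,v)‖ ≤ M₂‖u − v‖ for all t ∈ ℝ and u,v ∈ V; and ‖D₂g(t,v) − D₂g(s,v)‖ ≤ M₃|t−s|^θ for all s,t ∈ ℝ, v ∈ V. Then for all s,t ∈ ℝ and all a, a', b, b' ∈ V, ‖g(t,a) − g(t,a') − g(s,b) + g(s,b')‖ ≤ M₁‖(a − a') − (b − b')‖ + M₂(‖a − b‖ + ‖a' − b'‖)‖b − b'‖ +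 M₃|t−s|^θ‖b − b'‖. -/
/-- The four-point estimate for parameter-dependent maps: if `v ↦ g(t,v)` is `C¹` on a
neighborhood of a convex set `V` with partial derivative `D₂g` bounded by `M₁`,
`M₂`-Lipschitz in the space variable, and `M₃`-Hölder (exponent `θ`) in time on `V`, then
for `a, a', b, b' ∈ V`,
`‖g(t,a) − g(t,a') − g(s,b) + g(s,b')‖
  ≤ M₁‖(a−a')−(b−b')‖ + M₂(‖a−b‖+‖a'−b'‖)‖b−b'‖ + M₃|t−s|^θ‖b−b'‖`. -/
theorem four_point_estimate
    {E F : Type*} [NormedAddCommGroup E] [NormedSpace ℝ E]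
    [NormedAddCommGroup F] [NormedSpace ℝ F]
    (V : Set E) (hV : Convex ℝ V)
    (θ : ℝ) (hθ : θ ∈ Set.Ioc (0 : ℝ) 1)
    (M₁ M₂ M₃ : ℝ) (hM₁ : 0 ≤ M₁) (hM₂ : 0 ≤ M₂) (hM₃ : 0 ≤ M₃)
    (g : ℝ × E → F) (D : ℝ → E → (E →L[ℝ] F))
    (U : Set E) (hU : IsOpen U) (hVU : V ⊆ U)
    (hderiv : ∀ t : ℝ, ∀ v ∈ U, HasFDerivAt (fun w => g (t, w)) (D t v) v)
    (hcont : ∀ t : ℝ, ContinuousOn (D t) U)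
    (hbound : ∀ t : ℝ, ∀ v ∈ V, ‖D t v‖ ≤ M₁)
    (hlip : ∀ t : ℝ, ∀ u ∈ V, ∀ v ∈ V, ‖D t u - D t v‖ ≤ M₂ * ‖u - v‖)
    (hhol : ∀ s t : ℝ, ∀ v ∈ V, ‖D t v - D s v‖ ≤ M₃ * |t - s| ^ θ)
    (s t : ℝ) (a a' b b' : E)
    (ha : a ∈ V) (ha' : a' ∈ V) (hb : b ∈ V) (hb' : b' ∈ V) :
    ‖g (t, a) - g (t, a') - g (s, b) + g (s, b')‖ ≤
      M₁ * ‖(a - a') - (b - b')‖ + M₂ * (‖a - b‖ + ‖a' - b'‖) * ‖b - b'‖ +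
        M₃ * |t - s| ^ θ * ‖b - b'‖ := by
  set A : ℝ → E := fun r => a' + r • (a - a') with hA
  set B : ℝ → E := fun r => b' + r • (b - b') with hB
  have hmem : ∀ x y : E, x ∈ V → y ∈ V → ∀ r ∈ Set.Icc (0:ℝ) 1,
      y + r • (x - y) ∈ V := by
    intro x y hx hy r hr
    have h := hV hy hx (sub_nonneg.2 hr.2) hr.1 (by ring)
    convert h using 1
    module
  have hAV : ∀ r ∈ Set.Icc (0:ℝ) 1, A r ∈ V := fun r hr => hmem a a' ha ha' r hr
  have hBV : ∀ r ∈ Set.Icc (0:ℝ) 1, B r ∈ V := fun r hr => hmem b b' hb hb' r hr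
  set h : ℝ → F := fun r => g (t, A r) - g (s, B r) with hh
  set C : ℝ := M₁ * ‖(a - a') - (b - b')‖ + M₂ * (‖a - b‖ + ‖a' - b'‖) * ‖b - b'‖ +
        M₃ * |t - s| ^ θ * ‖b - b'‖ with hC
  have hderivh : ∀ r ∈ Set.Icc (0:ℝ) 1,
      HasDerivAt h (D t (A r) (a - a') - D s (B r) (b - b')) r := by
    intro r hr
    have hA' : HasDerivAt A (a - a') r := by
      simpa [hA] using ((hasDerivAt_id r).smul_const (a - a')).const_add a'
    have hB' : HasDerivAt B (b - b') r := by
      simpa [hB] using ((hasDerivAt_id r).smul_const (b - b')).const_add b'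
    have h1 : HasDerivAt (fun r => g (t, A r)) (D t (A r) (a - a')) r :=
      (hderiv t (A r) (hVU (hAV r hr))).comp_hasDerivAt r hA'
    have h2 : HasDerivAt (fun r => g (s, B r)) (D s (B r) (b - b')) r :=
      (hderiv s (B r) (hVU (hBV r hr))).comp_hasDerivAt r hB'
    exact h1.sub h2
  have hbnd : ∀ r ∈ Set.Icc (0:ℝ) 1,
      ‖D t (A r) (a - a') - D s (B r) (b - b')‖ ≤ C := by
    intro r hr
    have hAr := hAV r hr
    have hBr := hBV r hr
    have key : D t (A r) (a - a') - D s (B r) (b - b') =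
        D t (A r) ((a - a') - (b - b')) + (D t (A r) - D t (B r)) (b - b') +
        (D t (B r) - D s (B r)) (b - b') := by
      simp [ContinuousLinearMap.sub_apply, map_sub]
      abel
    rw [key]
    have e1 : ‖D t (A r) ((a - a') - (b - b'))‖ ≤ M₁ * ‖(a - a') - (b - b')‖ :=
      le_trans ((D t (A r)).le_opNorm _)
        (mul_le_mul_of_nonneg_right (hbound t _ hAr) (norm_nonneg _))
    have e2 : ‖(D t (A r) - D t (B r)) (b - b')‖ ≤
        M₂ * (‖a - b‖ + ‖a' - b'‖) * ‖b - b'‖ := by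
      have hAB : ‖A r - B r‖ ≤ ‖a - b‖ + ‖a' - b'‖ := by
        have hrw : A r - B r = (1 - r) • (a' - b') + r • (a - b) := by
          simp only [hA, hB]; module
        calc ‖A r - B r‖ ≤ ‖(1 - r) • (a' - b')‖ + ‖r • (a - b)‖ := by
              rw [hrw]; exact norm_add_le _ _
          _ = (1 - r) * ‖a' - b'‖ + r * ‖a - b‖ := by
              rw [norm_smul, norm_smul, Real.norm_eq_abs, Real.norm_eq_abs,
                abs_of_nonneg (sub_nonneg.2 hr.2), abs_of_nonneg hr.1]
          _ ≤ 1 * ‖a' - b'‖ + 1 * ‖a - b‖ := by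
              gcongr <;> [linarith [hr.1]; exact hr.2]
          _ = ‖a - b‖ + ‖a' - b'‖ := by ring
      calc ‖(D t (A r) - D t (B r)) (b - b')‖
          ≤ ‖D t (A r) - D t (B r)‖ * ‖b - b'‖ := ContinuousLinearMap.le_opNorm _ _
        _ ≤ (M₂ * ‖A r - B r‖) * ‖b - b'‖ := by
            gcongr; exact hlip t _ hAr _ hBr
        _ ≤ M₂ * (‖a - b‖ + ‖a' - b'‖) * ‖b - b'‖ := by
            gcongr
    have e3 : ‖(D t (B r) - D s (B r)) (b - b')‖ ≤ M₃ * |t - s| ^ θ * ‖b - b'‖ := by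
      calc ‖(D t (B r) - D s (B r)) (b - b')‖
          ≤ ‖D t (B r) - D s (B r)‖ * ‖b - b'‖ := ContinuousLinearMap.le_opNorm _ _
        _ ≤ M₃ * |t - s| ^ θ * ‖b - b'‖ := by
            gcongr; exact hhol s t _ hBr
    calc ‖D t (A r) ((a - a') - (b - b')) + (D t (A r) - D t (B r)) (b - b') +
          (D t (B r) - D s (B r)) (b - b')‖
        ≤ ‖D t (A r) ((a - a') - (b - b'))‖ + ‖(D t (A r) - D t (B r)) (b - b')‖ +
          ‖(D t (B r) - D s (B r)) (b - b')‖ := norm_add₃_le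
      _ ≤ C := by rw [hC]; gcongr
  have hmain := Convex.norm_image_sub_le_of_norm_hasDerivWithin_le
    (f := h) (f' := fun r => D t (A r) (a - a') - D s (B r) (b - b'))
    (C := C) (fun r hr => (hderivh r hr).hasDerivWithinAt) hbnd
    (convex_Icc 0 1) (Set.left_mem_Icc.2 one_pos.le) (Set.right_mem_Icc.2 one_pos.le)
  have hh1 : h 1 = g (t, a) - g (s, b) := by simp [hh, hA, hB]
  have hh0 : h 0 = g (t, a') - g (s, b') := by simp [hh, hA, hB]
  have : g (t, a) - g (t, a') - g (s, b) + g (s, b') = h 1 - h 0 := by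
    rw [hh1, hh0]; abel
  rw [this]
  simpa using hmain
end
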